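/- Let n ≥ 2 be even, let r > 0, z = √(1 + r²), and Ω ∈ ℝ. The curves q_i(t) = (r cos(Ωt + 2π(i−1)/n), r sin(Ωt + 2π(i−1)/n), z), i = 1,…,n, form a solution of the curved n-body equations on H² if and only if Ω² = 2 Σ_{j=1}^{n/2 − 1} (1 − cos(2jπ/n)) / ((r² cos(2jπ/n) − 1 − r²)² − 1)^{3/2} + 1/(4 r³ (1 + r²)^{3/2}). -/

import Mathlib

open Real

noncomputable section

/-- Lorentz inner product on `ℝ^{2,1} = ℝ × ℝ × ℝ`: `a⊙b = a₁b₁ + a₂b₂ − a₃b₃`. -/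
def ldot3 (a b : ℝ × ℝ × ℝ) : ℝ := a.1 * b.1 + a.2.1 * b.2.1 - a.2.2 * b.2.2

/-- The curved `n`-body problem on the hyperbolic plane `H²`, realized as the upper sheet
`{x² + y² − z² = −1, z > 0}` of the hyperboloid in `ℝ³` with the Lorentz product
(curvature `−1`), equal masses `mᵢ = 1`:  the curves stay on the upper sheet and satisfy
`q̈ᵢ = Σ_{j≠i} (qⱼ + (qᵢ⊙qⱼ) qᵢ)/((qᵢ⊙qⱼ)² − 1)^{3/2} + (q̇ᵢ⊙q̇ᵢ) qᵢ`. -/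
def IsHyperbolicSolution (n : ℕ) (q : Fin n → ℝ → ℝ × ℝ × ℝ) : Prop :=
  (∀ i t, ldot3 (q i t) (q i t) = -1 ∧ 0 < (q i t).2.2) ∧
  ∀ i t, deriv (deriv (q i)) t =
    (∑ j ∈ Finset.univ.erase i,
      (1 / (ldot3 (q i t) (q j t) ^ 2 - 1) ^ ((3 : ℝ) / 2)) •
        (q j t + ldot3 (q i t) (q j t) • q i t))
    + ldot3 (deriv (q i) t) (deriv (q i) t) • q i t

/-- The regular `n`-gon configuration rotating with angular velocity `Ω` on the circle of
radius `r` at height `z = √(1 + r²)` on the hyperboloid (bodies indexed by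
`i = 0,…,n−1`, corresponding to `i = 1,…,n` in the paper). -/
def polygonH (n : ℕ) (r Ω : ℝ) (i : Fin n) (t : ℝ) : ℝ × ℝ × ℝ :=
  (r * Real.cos (Ω * t + 2 * π * ((i : ℕ) : ℝ) / n),
   r * Real.sin (Ω * t + 2 * π * ((i : ℕ) : ℝ) / n),
   Real.sqrt (1 + r ^ 2))

/-! ### Auxiliary machinery -/

/-- The interaction kernel. -/
def Kf (r x : ℝ) : ℝ := ((r ^ 2 * x - 1 - r ^ 2) ^ 2 - 1) ^ ((3 : ℝ) / 2)

/-- The full sum over all other bodies. -/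
def Sfull (n : ℕ) (r : ℝ) : ℝ :=
  ∑ k ∈ Finset.Icc 1 (n - 1),
    (1 - Real.cos (2 * π * (k : ℝ) / n)) / Kf r (Real.cos (2 * π * (k : ℝ) / n))

/-- Reindexing a sum over `j ≠ i` of a `2π`-periodic function of the angle difference. -/
lemma polygon_reindex {n : ℕ} (hn : 0 < n) (G : ℝ → ℝ)
    (hG : Function.Periodic G (2 * π)) (i : Fin n) :
    ∑ j ∈ Finset.univ.erase i, G (2 * π * (((j : ℕ) : ℝ) - ((i : ℕ) : ℝ)) / n)
      = ∑ k ∈ Finset.Icc 1 (n - 1), G (2 * π * (k : ℝ) / n) := by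
  have hi := i.isLt
  have hmod : ∀ k : ℕ, 1 ≤ k → k ≤ n - 1 →
      (k + i.val) % n = if k + i.val < n then k + i.val else k + i.val - n := by
    intro k h1 h2
    split_ifs with h
    · exact Nat.mod_eq_of_lt h
    · rw [Nat.mod_eq_sub_mod (by omega), Nat.mod_eq_of_lt (by omega)]
  refine Finset.sum_nbij'
    (fun j => if i.val ≤ j.val then j.val - i.val else j.val + (n - i.val))
    (fun k => ⟨(k + i.val) % n, Nat.mod_lt _ hn⟩) ?_ ?_ ?_ ?_ ?_
  · intro j hj
    simp only [Finset.mem_erase, Finset.mem_univ, and_true] at hj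
    have hj' : j.val ≠ i.val := fun h => hj (Fin.ext h)
    have hjl := j.isLt
    simp only [Finset.mem_Icc]
    split_ifs <;> omega
  · intro k hk
    simp only [Finset.mem_Icc] at hk
    simp only [Finset.mem_erase, Finset.mem_univ, and_true]
    intro h
    have h2 : ((k + i.val) % n) = i.val := congrArg Fin.val h
    rw [hmod k hk.1 hk.2] at h2
    split_ifs at h2 <;> omega
  · intro j hj
    simp only [Finset.mem_erase, Finset.mem_univ, and_true] at hj
    have hj' : j.val ≠ i.val := fun h => hj (Fin.ext h)
    have hjl := j.isLt
    apply Fin.ext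
    show ((if i.val ≤ j.val then j.val - i.val else j.val + (n - i.val)) + i.val) % n = j.val
    split_ifs with h
    · rw [show j.val - i.val + i.val = j.val by omega, Nat.mod_eq_of_lt hjl]
    · rw [show j.val + (n - i.val) + i.val = j.val + n by omega, Nat.add_mod_right,
        Nat.mod_eq_of_lt hjl]
  · intro k hk
    simp only [Finset.mem_Icc] at hk
    show (if i.val ≤ (k + i.val) % n then (k + i.val) % n - i.val
        else (k + i.val) % n + (n - i.val)) = k
    rw [hmod k hk.1 hk.2]
    split_ifs <;> omega
  · intro j hj
    simp only [Finset.mem_erase, Finset.mem_univ, and_true] at hj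
    have hjl := j.isLt
    have hne : (n : ℝ) ≠ 0 := Nat.cast_ne_zero.mpr hn.ne'
    beta_reduce
    by_cases h : i.val ≤ j.val
    · rw [if_pos h, Nat.cast_sub h]
    · rw [if_neg h]
      have hcast : ((j.val + (n - i.val) : ℕ) : ℝ) = (j.val : ℝ) + (n : ℝ) - (i.val : ℝ) := by
        have h3 : ((n - i.val : ℕ) : ℝ) = (n : ℝ) - (i.val : ℝ) := Nat.cast_sub hi.le
        push_cast [h3]
        ring
      rw [hcast]
      have harg : 2 * π * ((j.val : ℝ) + (n : ℝ) - (i.val : ℝ)) / n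
          = 2 * π * (((j : ℕ) : ℝ) - ((i : ℕ) : ℝ)) / n + 2 * π := by
        field_simp
        ring
      rw [harg]
      exact (hG _).symm

lemma polygon_refl_cos {n : ℕ} (hn : 0 < n) {a : ℕ} (ha : a ≤ n) :
    Real.cos (2 * π * ((n - a : ℕ) : ℝ) / n) = Real.cos (2 * π * (a : ℝ) / n) := by
  have hne : (n : ℝ) ≠ 0 := Nat.cast_ne_zero.mpr hn.ne'
  have harg : 2 * π * ((n - a : ℕ) : ℝ) / n = 2 * π - 2 * π * (a : ℝ) / n := by
    rw [Nat.cast_sub ha]; field_simp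
  rw [harg, Real.cos_sub, Real.sin_two_pi, Real.cos_two_pi]
  ring

lemma polygon_refl_sin {n : ℕ} (hn : 0 < n) {a : ℕ} (ha : a ≤ n) :
    Real.sin (2 * π * ((n - a : ℕ) : ℝ) / n) = -Real.sin (2 * π * (a : ℝ) / n) := by
  have hne : (n : ℝ) ≠ 0 := Nat.cast_ne_zero.mpr hn.ne'
  have harg : 2 * π * ((n - a : ℕ) : ℝ) / n = 2 * π - 2 * π * (a : ℝ) / n := by
    rw [Nat.cast_sub ha]; field_simp
  rw [harg, Real.sin_sub, Real.sin_two_pi, Real.cos_two_pi]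
  ring

/-- The sine sum vanishes by the reflection `k ↦ n - k`. -/
lemma polygon_sin_sum {n : ℕ} (hn : 0 < n) (F : ℝ → ℝ) :
    ∑ k ∈ Finset.Icc 1 (n - 1),
      Real.sin (2 * π * (k : ℝ) / n) / F (Real.cos (2 * π * (k : ℝ) / n)) = 0 := by
  set S := ∑ k ∈ Finset.Icc 1 (n - 1),
    Real.sin (2 * π * (k : ℝ) / n) / F (Real.cos (2 * π * (k : ℝ) / n)) with hS
  have key : S = ∑ k ∈ Finset.Icc 1 (n - 1),
      -(Real.sin (2 * π * (k : ℝ) / n) / F (Real.cos (2 * π * (k : ℝ) / n))) := by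
    rw [hS]
    refine Finset.sum_nbij' (fun k => n - k) (fun k => n - k) ?_ ?_ ?_ ?_ ?_
    · intro a ha; simp only [Finset.mem_Icc] at *; omega
    · intro a ha; simp only [Finset.mem_Icc] at *; omega
    · intro a ha; simp only [Finset.mem_Icc] at ha; show n - (n - a) = a; omega
    · intro a ha; simp only [Finset.mem_Icc] at ha; show n - (n - a) = a; omega
    · intro a ha
      simp only [Finset.mem_Icc] at ha
      show Real.sin (2 * π * (a : ℝ) / n) / F (Real.cos (2 * π * (a : ℝ) / n))
        = -(Real.sin (2 * π * ((n - a : ℕ) : ℝ) / n) / F (Real.cos (2 * π * ((n - a : ℕ) : ℝ) / n)))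
      rw [polygon_refl_sin hn (by omega), polygon_refl_cos hn (by omega)]
      ring
  have h2 : S = -S := key.trans (by rw [Finset.sum_neg_distrib, ← hS])
  linarith

/-- `((2r)² (1+r²))^{3/2} = 8 r³ (1+r²)^{3/2}` for `r > 0`. -/
lemma rpow_helper {r : ℝ} (hr : 0 < r) :
    (((2 * r) ^ 2 * (1 + r ^ 2)) : ℝ) ^ ((3 : ℝ) / 2)
      = 8 * r ^ 3 * (1 + r ^ 2) ^ ((3 : ℝ) / 2) := by
  rw [Real.mul_rpow (by positivity) (by positivity)]
  have h1 : ((2 * r) ^ 2 : ℝ) ^ ((3 : ℝ) / 2) = (2 * r) ^ (3 : ℕ) := by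
    rw [← Real.rpow_natCast (2 * r) 2, ← Real.rpow_mul (by positivity),
      ← Real.rpow_natCast (2 * r) 3]
    norm_num
  rw [h1]
  ring

/-- The pairing identity turning `Sfull` into the expression in the theorem. -/
lemma polygon_pairing {n : ℕ} (hn : 2 ≤ n) (heven : Even n) {r : ℝ} (hr0 : 0 < r) :
    Sfull n r = 2 * (∑ j ∈ Finset.Icc 1 (n / 2 - 1),
        (1 - Real.cos (2 * (j : ℝ) * π / n)) /
          ((r ^ 2 * Real.cos (2 * (j : ℝ) * π / n) - 1 - r ^ 2) ^ 2 - 1) ^ ((3 : ℝ) / 2))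
        + 1 / (4 * r ^ 3 * (1 + r ^ 2) ^ ((3 : ℝ) / 2)) := by
  obtain ⟨m, hm⟩ := heven
  have hm1 : 1 ≤ m := by omega
  have hnm : n = 2 * m := by omega
  have hn2 : n / 2 = m := by omega
  have hne : (n : ℝ) ≠ 0 := Nat.cast_ne_zero.mpr (by omega)
  set g : ℕ → ℝ := fun k =>
    (1 - Real.cos (2 * π * (k : ℝ) / n)) / Kf r (Real.cos (2 * π * (k : ℝ) / n)) with hg
  have hIcc : Finset.Icc 1 (n - 1) = Finset.Ioc 0 (n - 1) := Finset.Icc_add_one_left_eq_Ioc ..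
  have split1 : ∑ k ∈ Finset.Ioc 0 m, g k + ∑ k ∈ Finset.Ioc m (n - 1), g k
      = ∑ k ∈ Finset.Ioc 0 (n - 1), g k :=
    Finset.sum_Ioc_consecutive g (by omega) (by omega)
  have split2 : ∑ k ∈ Finset.Ioc 0 m, g k = ∑ k ∈ Finset.Ioc 0 (m - 1), g k + g m := by
    have hm' : m = (m - 1) + 1 := by omega
    rw [hm', Finset.sum_Ioc_succ_top (by omega), ← hm']
  have hrefl : ∑ k ∈ Finset.Ioc m (n - 1), g k = ∑ k ∈ Finset.Ioc 0 (m - 1), g k := by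
    refine Finset.sum_nbij' (fun k => n - k) (fun k => n - k) ?_ ?_ ?_ ?_ ?_
    · intro a ha; simp only [Finset.mem_Ioc] at *; omega
    · intro a ha; simp only [Finset.mem_Ioc] at *; omega
    · intro a ha; simp only [Finset.mem_Ioc] at ha; show n - (n - a) = a; omega
    · intro a ha; simp only [Finset.mem_Ioc] at ha; show n - (n - a) = a; omega
    · intro a ha
      simp only [Finset.mem_Ioc] at ha
      show g a = g (n - a)
      simp only [hg]
      rw [polygon_refl_cos (by omega) (by omega)]
  have hgm : g m = 1 / (4 * r ^ 3 * (1 + r ^ 2) ^ ((3 : ℝ) / 2)) := by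
    have hargm : 2 * π * (m : ℝ) / n = π := by
      have hmne : (m : ℝ) ≠ 0 := Nat.cast_ne_zero.mpr (by omega)
      have hcast : (n : ℝ) = 2 * (m : ℝ) := by exact_mod_cast congrArg (Nat.cast : ℕ → ℝ) hnm
      rw [hcast]; field_simp
    simp only [hg]
    rw [hargm, Real.cos_pi, Kf]
    have h4 : (r ^ 2 * (-1) - 1 - r ^ 2) ^ 2 - 1 = (2 * r) ^ 2 * (1 + r ^ 2) := by ring
    rw [h4, rpow_helper hr0]
    have hpos : (0 : ℝ) < (1 + r ^ 2) ^ ((3 : ℝ) / 2) :=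
      Real.rpow_pos_of_pos (by positivity) _
    rw [show (1 : ℝ) - (-1) = 2 by norm_num]
    rw [div_eq_div_iff (by positivity) (by positivity)]
    ring
  have hsum : Sfull n r = 2 * (∑ k ∈ Finset.Ioc 0 (m - 1), g k) + g m := by
    rw [Sfull, hIcc, ← split1, split2, hrefl]
    ring
  rw [hsum, hgm, hn2]
  congr 1
  congr 1
  rw [show Finset.Icc 1 (m - 1) = Finset.Ioc 0 (m - 1) from Finset.Icc_add_one_left_eq_Ioc ..]
  refine Finset.sum_congr rfl fun j _ => ?_
  simp only [hg, Kf]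
  rw [show 2 * π * (j : ℝ) / n = 2 * (j : ℝ) * π / n by ring]

/-! ### Derivatives of the polygon configuration -/

lemma polygonH_hasDerivAt (n : ℕ) (r Ω : ℝ) (i : Fin n) (t : ℝ) :
    HasDerivAt (polygonH n r Ω i)
      (-(r * Ω) * Real.sin (Ω * t + 2 * π * ((i : ℕ) : ℝ) / n),
       r * Ω * Real.cos (Ω * t + 2 * π * ((i : ℕ) : ℝ) / n), 0) t := by
  have hdef : polygonH n r Ω i = fun s =>
      ((r * Real.cos (Ω * s + 2 * π * ((i : ℕ) : ℝ) / n),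
        r * Real.sin (Ω * s + 2 * π * ((i : ℕ) : ℝ) / n),
        Real.sqrt (1 + r ^ 2)) : ℝ × ℝ × ℝ) := rfl
  rw [hdef]
  have h1 : HasDerivAt (fun s : ℝ => Ω * s + 2 * π * ((i : ℕ) : ℝ) / n) Ω t := by
    simpa using ((hasDerivAt_id t).const_mul Ω).add_const (2 * π * ((i : ℕ) : ℝ) / n)
  have hx := h1.cos.const_mul r
  have hy := h1.sin.const_mul r
  have hz : HasDerivAt (fun _ : ℝ => Real.sqrt (1 + r ^ 2)) 0 t := hasDerivAt_const t _
  have h := hx.prodMk (hy.prodMk hz)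
  convert h using 2 <;> ring

lemma polygonH_deriv (n : ℕ) (r Ω : ℝ) (i : Fin n) :
    deriv (polygonH n r Ω i) = fun t =>
      ((-(r * Ω) * Real.sin (Ω * t + 2 * π * ((i : ℕ) : ℝ) / n),
        r * Ω * Real.cos (Ω * t + 2 * π * ((i : ℕ) : ℝ) / n), 0) : ℝ × ℝ × ℝ) :=
  funext fun t => (polygonH_hasDerivAt n r Ω i t).deriv

lemma polygonH_deriv2 (n : ℕ) (r Ω : ℝ) (i : Fin n) (t : ℝ) :
    deriv (deriv (polygonH n r Ω i)) t =
      ((-(r * Ω ^ 2) * Real.cos (Ω * t + 2 * π * ((i : ℕ) : ℝ) / n),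
        -(r * Ω ^ 2) * Real.sin (Ω * t + 2 * π * ((i : ℕ) : ℝ) / n), 0) : ℝ × ℝ × ℝ) := by
  rw [polygonH_deriv]
  have h1 : HasDerivAt (fun s : ℝ => Ω * s + 2 * π * ((i : ℕ) : ℝ) / n) Ω t := by
    simpa using ((hasDerivAt_id t).const_mul Ω).add_const (2 * π * ((i : ℕ) : ℝ) / n)
  have hx := h1.sin.const_mul (-(r * Ω))
  have hy := h1.cos.const_mul (r * Ω)
  have hz : HasDerivAt (fun _ : ℝ => (0 : ℝ)) 0 t := hasDerivAt_const t _
  have h := (hx.prodMk (hy.prodMk hz)).deriv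
  rw [h]
  refine Prod.ext ?_ (Prod.ext ?_ rfl) <;> simp <;> ring

lemma polygonH_ldot_self (n : ℕ) (r Ω : ℝ) (i : Fin n) (t : ℝ) :
    ldot3 (polygonH n r Ω i t) (polygonH n r Ω i t) = -1 := by
  have h := Real.sin_sq_add_cos_sq (Ω * t + 2 * π * ((i : ℕ) : ℝ) / n)
  have h2 : Real.sqrt (1 + r ^ 2) ^ 2 = 1 + r ^ 2 := Real.sq_sqrt (by positivity)
  simp only [ldot3, polygonH]
  nlinarith [h, h2]

lemma polygonH_ldot_deriv (n : ℕ) (r Ω : ℝ) (i : Fin n) (t : ℝ) :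
    ldot3 (deriv (polygonH n r Ω i) t) (deriv (polygonH n r Ω i) t) = r ^ 2 * Ω ^ 2 := by
  rw [polygonH_deriv]
  simp only [ldot3]
  have h := Real.sin_sq_add_cos_sq (Ω * t + 2 * π * ((i : ℕ) : ℝ) / n)
  nlinarith [h]

lemma polygonH_ldot_pair (n : ℕ) (r Ω : ℝ) (i j : Fin n) (t : ℝ) :
    ldot3 (polygonH n r Ω i t) (polygonH n r Ω j t)
      = r ^ 2 * Real.cos (2 * π * (((j : ℕ) : ℝ) - ((i : ℕ) : ℝ)) / n) - 1 - r ^ 2 := by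
  have h2 : Real.sqrt (1 + r ^ 2) ^ 2 = 1 + r ^ 2 := Real.sq_sqrt (by positivity)
  have hcos : Real.cos (2 * π * (((j : ℕ) : ℝ) - ((i : ℕ) : ℝ)) / n)
      = Real.cos ((Ω * t + 2 * π * ((j : ℕ) : ℝ) / n) - (Ω * t + 2 * π * ((i : ℕ) : ℝ) / n)) := by
    congr 1; ring
  rw [hcos, Real.cos_sub]
  simp only [ldot3, polygonH]
  nlinarith [h2]

/-- Evaluation of a single interaction term. -/
lemma polygon_term_eval (n : ℕ) (r Ω : ℝ) (i j : Fin n) (t : ℝ) :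
    (1 / (ldot3 (polygonH n r Ω i t) (polygonH n r Ω j t) ^ 2 - 1) ^ ((3 : ℝ) / 2)) •
        (polygonH n r Ω j t + ldot3 (polygonH n r Ω i t) (polygonH n r Ω j t) • polygonH n r Ω i t)
      = (((r * Real.cos (Ω * t + 2 * π * ((i : ℕ) : ℝ) / n) * (1 + r ^ 2)) *
            ((Real.cos (2 * π * (((j : ℕ) : ℝ) - ((i : ℕ) : ℝ)) / n) - 1) /
              Kf r (Real.cos (2 * π * (((j : ℕ) : ℝ) - ((i : ℕ) : ℝ)) / n)))
          - (r * Real.sin (Ω * t + 2 * π * ((i : ℕ) : ℝ) / n)) *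
            (Real.sin (2 * π * (((j : ℕ) : ℝ) - ((i : ℕ) : ℝ)) / n) /
              Kf r (Real.cos (2 * π * (((j : ℕ) : ℝ) - ((i : ℕ) : ℝ)) / n))),
          (r * Real.sin (Ω * t + 2 * π * ((i : ℕ) : ℝ) / n) * (1 + r ^ 2)) *
            ((Real.cos (2 * π * (((j : ℕ) : ℝ) - ((i : ℕ) : ℝ)) / n) - 1) /
              Kf r (Real.cos (2 * π * (((j : ℕ) : ℝ) - ((i : ℕ) : ℝ)) / n)))
          + (r * Real.cos (Ω * t + 2 * π * ((i : ℕ) : ℝ) / n)) *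
            (Real.sin (2 * π * (((j : ℕ) : ℝ) - ((i : ℕ) : ℝ)) / n) /
              Kf r (Real.cos (2 * π * (((j : ℕ) : ℝ) - ((i : ℕ) : ℝ)) / n))),
          (Real.sqrt (1 + r ^ 2) * r ^ 2) *
            ((Real.cos (2 * π * (((j : ℕ) : ℝ) - ((i : ℕ) : ℝ)) / n) - 1) /
              Kf r (Real.cos (2 * π * (((j : ℕ) : ℝ) - ((i : ℕ) : ℝ)) / n)))) : ℝ × ℝ × ℝ) := by
  rw [polygonH_ldot_pair n r Ω i j t]
  have hKf : ((r ^ 2 * Real.cos (2 * π * (((j : ℕ) : ℝ) - ((i : ℕ) : ℝ)) / n) - 1 - r ^ 2) ^ 2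
      - 1) ^ ((3 : ℝ) / 2)
      = Kf r (Real.cos (2 * π * (((j : ℕ) : ℝ) - ((i : ℕ) : ℝ)) / n)) := rfl
  have hcosj : Real.cos (Ω * t + 2 * π * ((j : ℕ) : ℝ) / n)
      = Real.cos (Ω * t + 2 * π * ((i : ℕ) : ℝ) / n) *
          Real.cos (2 * π * (((j : ℕ) : ℝ) - ((i : ℕ) : ℝ)) / n)
        - Real.sin (Ω * t + 2 * π * ((i : ℕ) : ℝ) / n) *
          Real.sin (2 * π * (((j : ℕ) : ℝ) - ((i : ℕ) : ℝ)) / n) := by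
    rw [show Ω * t + 2 * π * ((j : ℕ) : ℝ) / n
        = (Ω * t + 2 * π * ((i : ℕ) : ℝ) / n) + 2 * π * (((j : ℕ) : ℝ) - ((i : ℕ) : ℝ)) / n
      by ring, Real.cos_add]
  have hsinj : Real.sin (Ω * t + 2 * π * ((j : ℕ) : ℝ) / n)
      = Real.sin (Ω * t + 2 * π * ((i : ℕ) : ℝ) / n) *
          Real.cos (2 * π * (((j : ℕ) : ℝ) - ((i : ℕ) : ℝ)) / n)
        + Real.cos (Ω * t + 2 * π * ((i : ℕ) : ℝ) / n) *
          Real.sin (2 * π * (((j : ℕ) : ℝ) - ((i : ℕ) : ℝ)) / n) := by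
    rw [show Ω * t + 2 * π * ((j : ℕ) : ℝ) / n
        = (Ω * t + 2 * π * ((i : ℕ) : ℝ) / n) + 2 * π * (((j : ℕ) : ℝ) - ((i : ℕ) : ℝ)) / n
      by ring, Real.sin_add]
  simp only [polygonH, Prod.smul_mk, Prod.mk_add_mk, smul_eq_mul]
  rw [hcosj, hsinj, hKf]
  simp only [Prod.mk.injEq]
  refine ⟨by ring, by ring, by ring⟩

/-- Evaluation of the interaction sum for the polygon configuration. -/
lemma polygon_sum_eval (n : ℕ) (hn : 0 < n) (r Ω : ℝ) (i : Fin n) (t : ℝ) :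
    (∑ j ∈ Finset.univ.erase i,
      (1 / (ldot3 (polygonH n r Ω i t) (polygonH n r Ω j t) ^ 2 - 1) ^ ((3 : ℝ) / 2)) •
        (polygonH n r Ω j t + ldot3 (polygonH n r Ω i t) (polygonH n r Ω j t) • polygonH n r Ω i t))
    = ((-(r * Real.cos (Ω * t + 2 * π * ((i : ℕ) : ℝ) / n) * (1 + r ^ 2) * Sfull n r),
        -(r * Real.sin (Ω * t + 2 * π * ((i : ℕ) : ℝ) / n) * (1 + r ^ 2) * Sfull n r),
        -(Real.sqrt (1 + r ^ 2) * r ^ 2 * Sfull n r)) : ℝ × ℝ × ℝ) := by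
  rw [Finset.sum_congr rfl (fun j _ => polygon_term_eval n r Ω i j t)]
  have hper1 : Function.Periodic
      (fun x => (Real.cos x - 1) / Kf r (Real.cos x)) (2 * π) := fun x => by
    simp [Real.cos_add_two_pi]
  have hper2 : Function.Periodic
      (fun x => Real.sin x / Kf r (Real.cos x)) (2 * π) := fun x => by
    simp [Real.cos_add_two_pi, Real.sin_add_two_pi]
  have hsum1 : ∑ j ∈ Finset.univ.erase i,
      (Real.cos (2 * π * (((j : ℕ) : ℝ) - ((i : ℕ) : ℝ)) / n) - 1) /
        Kf r (Real.cos (2 * π * (((j : ℕ) : ℝ) - ((i : ℕ) : ℝ)) / n))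
      = -(Sfull n r) := by
    have h := polygon_reindex hn (fun x => (Real.cos x - 1) / Kf r (Real.cos x)) hper1 i
    rw [h]
    rw [show (∑ k ∈ Finset.Icc 1 (n - 1), (Real.cos (2 * π * (k : ℝ) / n) - 1) /
          Kf r (Real.cos (2 * π * (k : ℝ) / n)))
        = ∑ k ∈ Finset.Icc 1 (n - 1), -((1 - Real.cos (2 * π * (k : ℝ) / n)) /
          Kf r (Real.cos (2 * π * (k : ℝ) / n)))
      from Finset.sum_congr rfl fun k _ => by ring]
    rw [Finset.sum_neg_distrib]
    rfl
  have hsum2 : ∑ j ∈ Finset.univ.erase i,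
      Real.sin (2 * π * (((j : ℕ) : ℝ) - ((i : ℕ) : ℝ)) / n) /
        Kf r (Real.cos (2 * π * (((j : ℕ) : ℝ) - ((i : ℕ) : ℝ)) / n)) = 0 := by
    have h := polygon_reindex hn (fun x => Real.sin x / Kf r (Real.cos x)) hper2 i
    rw [h]
    exact polygon_sin_sum hn (Kf r)
  refine Prod.ext ?_ (Prod.ext ?_ ?_)
  · rw [Prod.fst_sum]
    simp only
    rw [Finset.sum_sub_distrib, ← Finset.mul_sum, ← Finset.mul_sum, hsum1, hsum2]
    ring
  · rw [Prod.snd_sum, Prod.fst_sum]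
    simp only
    rw [Finset.sum_add_distrib, ← Finset.mul_sum, ← Finset.mul_sum, hsum1, hsum2]
    ring
  · rw [Prod.snd_sum, Prod.snd_sum]
    simp only
    rw [← Finset.mul_sum, hsum1]
    ring

/-- For even `n ≥ 2` and `r > 0`, the rotating regular `n`-gon at height `z = √(1 + r²)`
on `H²` is a solution of the curved `n`-body equations if and only if
`Ω² = 2 Σ_{j=1}^{n/2−1} (1 − cos(2jπ/n)) / ((r² cos(2jπ/n) − 1 − r²)² − 1)^{3/2}
      + 1/(4 r³ (1 + r²)^{3/2})`. -/
theorem polygon_relative_equilibrium_iff_hyperbolic_even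
    (n : ℕ) (hn : 2 ≤ n) (heven : Even n) (r : ℝ) (hr0 : 0 < r) (Ω : ℝ) :
    IsHyperbolicSolution n (polygonH n r Ω) ↔
      Ω ^ 2 = 2 * (∑ j ∈ Finset.Icc 1 (n / 2 - 1),
        (1 - Real.cos (2 * (j : ℝ) * π / n)) /
          ((r ^ 2 * Real.cos (2 * (j : ℝ) * π / n) - 1 - r ^ 2) ^ 2 - 1) ^ ((3 : ℝ) / 2))
        + 1 / (4 * r ^ 3 * (1 + r ^ 2) ^ ((3 : ℝ) / 2)) := by
  have hn0 : 0 < n := by omega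
  have hzpos : (0 : ℝ) < Real.sqrt (1 + r ^ 2) := Real.sqrt_pos.mpr (by positivity)
  constructor
  · rintro ⟨_, hode⟩
    rw [← polygon_pairing hn heven hr0]
    have h := congrArg (fun p : ℝ × ℝ × ℝ => p.2.2) (hode ⟨0, hn0⟩ 0)
    rw [polygonH_deriv2, polygon_sum_eval n hn0 r Ω ⟨0, hn0⟩ 0, polygonH_ldot_deriv] at h
    simp only [Prod.mk_add_mk, Prod.smul_mk, smul_eq_mul, polygonH] at h
    have h3 : Real.sqrt (1 + r ^ 2) * r ^ 2 * (Ω ^ 2 - Sfull n r) = 0 := by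
      linear_combination -h
    rcases mul_eq_zero.mp h3 with h4 | h4
    · exfalso
      have : (0:ℝ) < Real.sqrt (1 + r ^ 2) * r ^ 2 := by positivity
      linarith
    · linarith [sub_eq_zero.mp h4]
  · intro hΩ
    have hS : Ω ^ 2 = Sfull n r := by rw [hΩ, polygon_pairing hn heven hr0]
    constructor
    · intro i t
      exact ⟨polygonH_ldot_self n r Ω i t, hzpos⟩
    · intro i t
      rw [polygonH_deriv2, polygon_sum_eval n hn0 r Ω i t, polygonH_ldot_deriv]
      simp only [polygonH, Prod.mk_add_mk, Prod.smul_mk, smul_eq_mul]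
      rw [← hS]
      simp only [Prod.mk.injEq]
      refine ⟨by ring, by ring, by ring⟩

end
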